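/- Assume λ₁<λ₂ and λ₁<λ₃. Then there exists Δ₀>0 such that for every Δ>Δ₀ (with the contour L and the function φ constructed for this Δ) there exist constants C>0 and ε>0 with the following properties for every y=(y₂,y₃)∈ℤ² satisfying min(y₂,y₃)<0 and φ(y)>C: (a) Σ_z r_{yz}·(φ(z)−φ(y)) ≤ 0, where the sum is over all rollback transitions from y; (b) φ(y+(λ₂−λ₁, λ₃−λ₁)) − φ(y) < −5ε. -/

import Mathlib

noncomputable section

/-- The quadratic form `e(y₂,y₃) = a·y₂² + b·(y₂−y₃)²` defining the ellipse. -/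
def eF (a b : ℝ) (y : ℝ × ℝ) : ℝ := a * y.1 ^ 2 + b * (y.1 - y.2) ^ 2

/-- The gradient of `eF`. -/
def gradE (a b : ℝ) (y : ℝ × ℝ) : ℝ × ℝ :=
  (2 * a * y.1 + 2 * b * (y.1 - y.2), -(2 * b * (y.1 - y.2)))

/-- Euclidean inner product on `ℝ × ℝ`. -/
def dotp (u v : ℝ × ℝ) : ℝ := u.1 * v.1 + u.2 * v.2

/-- Euclidean norm on `ℝ × ℝ`. -/
def enorm2 (v : ℝ × ℝ) : ℝ := Real.sqrt (v.1 ^ 2 + v.2 ^ 2)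

/-- `T` is a point of the ellipse in the open quadrant `{y₂<0, y₃<0}` where the
gradient of `e` is a positive multiple of `(−Δ, 1)`. -/
def IsT3 (a b Δ : ℝ) (T : ℝ × ℝ) : Prop :=
  eF a b T = 1 ∧ T.1 < 0 ∧ T.2 < 0 ∧ ∃ c > 0, gradE a b T = c • ((-Δ, 1) : ℝ × ℝ)

/-- `T` is a point of the ellipse with `y₃ < 0` where the gradient of `e`
is a positive multiple of `(1, −Δ)`. -/
def IsT2 (a b Δ : ℝ) (T : ℝ × ℝ) : Prop :=
  eF a b T = 1 ∧ T.2 < 0 ∧ ∃ c > 0, gradE a b T = c • ((1, -Δ) : ℝ × ℝ)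

/-- The configuration of the tangency points `T₂, T₃` and of the intercepts
`K₂ = (u₂,0)`, `K₃ = (0,u₃)` of the corresponding tangent lines with the axes. -/
def GoodConfig (a b Δ u₂ u₃ : ℝ) (T₂ T₃ : ℝ × ℝ) : Prop :=
  IsT2 a b Δ T₂ ∧ IsT3 a b Δ T₃ ∧ 0 < u₂ ∧ 0 < u₃ ∧
  dotp (gradE a b T₂) (((u₂, 0) : ℝ × ℝ) - T₂) = 0 ∧
  dotp (gradE a b T₃) (((0, u₃) : ℝ × ℝ) - T₃) = 0

/-- The closed arc of the ellipse from `T₂` to `T₃` passing through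
`(−a^{−1/2}, −a^{−1/2})`: the points of the ellipse whose outward normal direction
lies in the closed convex cone spanned by `(1, −Δ)` (normal at `T₂`) and
`(−Δ, 1)` (normal at `T₃`). -/
def arcE (a b Δ : ℝ) : Set (ℝ × ℝ) :=
  {y | eF a b y = 1 ∧ ∃ c₂ c₃ : ℝ, 0 ≤ c₂ ∧ 0 ≤ c₃ ∧
    gradE a b y = c₂ • ((1, -Δ) : ℝ × ℝ) + c₃ • ((-Δ, 1) : ℝ × ℝ)}

/-- The closed contour `L`: segment `K₃K₂`, segment `K₂T₂`, the arc of the ellipse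
from `T₂` to `T₃` through `(−a^{−1/2},−a^{−1/2})`, and segment `T₃K₃`. -/
def contourL (a b Δ u₂ u₃ : ℝ) (T₂ T₃ : ℝ × ℝ) : Set (ℝ × ℝ) :=
  segment ℝ ((0, u₃) : ℝ × ℝ) ((u₂, 0) : ℝ × ℝ) ∪
    segment ℝ ((u₂, 0) : ℝ × ℝ) T₂ ∪ arcE a b Δ ∪
    segment ℝ T₃ ((0, u₃) : ℝ × ℝ)

/-- `φ` is the homogeneous functional associated with the contour `L`:
`φ(0) = 0` and, for `y ≠ 0`, `φ(y)` is positive with `y/φ(y) ∈ L`. -/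
def IsPhi (L : Set (ℝ × ℝ)) (φ : ℝ × ℝ → ℝ) : Prop :=
  φ 0 = 0 ∧ ∀ y : ℝ × ℝ, y ≠ 0 → 0 < φ y ∧ (φ y)⁻¹ • y ∈ L

/-- `n` is the outward unit normal field of the contour `L` (defined except at
`K₂` and `K₃`): on the elliptic arc it is `∇e(y)/‖∇e(y)‖`, and it is constant on
each of the three straight pieces, equal to `n(T₂)` on `(K₂,T₂]`, to `n(T₃)` on
`[T₃,K₃)`, and to the normalized `(u₂⁻¹, u₃⁻¹)` on `(K₃,K₂)`. -/
def IsN (a b Δ u₂ u₃ : ℝ) (T₂ T₃ : ℝ × ℝ) (n : ℝ × ℝ → ℝ × ℝ) : Prop :=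
  (∀ y ∈ arcE a b Δ, n y = (enorm2 (gradE a b y))⁻¹ • gradE a b y) ∧
  (∀ y ∈ segment ℝ ((u₂, 0) : ℝ × ℝ) T₂, y ≠ ((u₂, 0) : ℝ × ℝ) → n y = n T₂) ∧
  (∀ y ∈ segment ℝ T₃ ((0, u₃) : ℝ × ℝ), y ≠ ((0, u₃) : ℝ × ℝ) → n y = n T₃) ∧
  (∀ y ∈ segment ℝ ((0, u₃) : ℝ × ℝ) ((u₂, 0) : ℝ × ℝ),
    y ≠ ((0, u₃) : ℝ × ℝ) → y ≠ ((u₂, 0) : ℝ × ℝ) →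
    n y = (enorm2 ((u₂⁻¹, u₃⁻¹) : ℝ × ℝ))⁻¹ • ((u₂⁻¹, u₃⁻¹) : ℝ × ℝ))

/-- Coercion of an integer lattice point to `ℝ × ℝ`. -/
def iv (y : ℤ × ℤ) : ℝ × ℝ := ((y.1 : ℝ), (y.2 : ℝ))

/-- Free-dynamics part `s_{yz}` of the transition probabilities of the embedded
relative-coordinate chain of the three-processor cascade model. -/
def sker (l1 l2 l3 : ℝ) (y z : ℤ × ℤ) : ℝ :=
  (if z = y + (1, 0) then l2 else 0) + (if z = y + (0, 1) then l3 else 0) +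
    (if z = y - (1, 1) then l1 else 0)

/-- Rollback part `r_{yz}` of the transition probabilities of the embedded
relative-coordinate chain of the three-processor cascade model
(`b2 = λ₂/(λ₂+β₁₂)`). -/
def rker (b12 b23 b2 : ℝ) (y z : ℤ × ℤ) : ℝ :=
  (if 0 < y.1 ∧ y.2 ≤ 0 ∧ z = (0, y.2) then b12 else 0) +
  (if y.1 < y.2 ∧ z = (y.1, y.1) then b23 else 0) +
  (if 0 < y.2 ∧ y.2 ≤ y.1 ∧ z.1 = 0 ∧ 0 ≤ z.2 ∧ z.2 < y.2 then
      b12 * (1 - b2) ^ z.2.toNat * b2 else 0) +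
  (if 0 < y.2 ∧ y.2 ≤ y.1 ∧ z = (0, y.2) then b12 * (1 - b2) ^ y.2.toNat else 0) +
  (if 0 < y.1 ∧ y.1 < y.2 ∧ z.1 = 0 ∧ 0 ≤ z.2 ∧ z.2 ≤ y.1 then
      b12 * (1 - b2) ^ z.2.toNat * b2 else 0) +
  (if 0 < y.1 ∧ y.1 < y.2 ∧ z = (0, y.2) then b12 * (1 - b2) ^ (y.1.toNat + 1) else 0)

/-- Total transition probability `p_{yz}` of the embedded relative-coordinate chain:
for `z ≠ y` it is `s_{yz} + r_{yz}`, and the remaining probability mass is assigned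
to staying at `y`. -/
def pker (l1 l2 l3 b12 b23 b2 : ℝ) (y z : ℤ × ℤ) : ℝ :=
  sker l1 l2 l3 y z + rker b12 b23 b2 y z +
    (if z = y then 1 - ∑' w : ℤ × ℤ, (sker l1 l2 l3 y w + rker b12 b23 b2 y w) else 0)

lemma eF_nonneg (a b : ℝ) (ha : 0 ≤ a) (hb : 0 ≤ b) (x : ℝ × ℝ) : 0 ≤ eF a b x := by
  unfold eF; positivity

lemma eF_expand (a b : ℝ) (q x : ℝ × ℝ) :
    eF a b x = eF a b q + dotp (gradE a b q) (x - q) + eF a b (x - q) := by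
  simp [eF, gradE, dotp, Prod.fst_sub, Prod.snd_sub]; ring

lemma dotp_grad_self (a b : ℝ) (q : ℝ × ℝ) : dotp (gradE a b q) q = 2 * eF a b q := by
  simp [gradE, dotp, eF]; ring

lemma mem_seg {A B x : ℝ × ℝ} (h : x ∈ segment ℝ A B) :
    ∃ s t : ℝ, 0 ≤ s ∧ 0 ≤ t ∧ s + t = 1 ∧ x.1 = s * A.1 + t * B.1 ∧ x.2 = s * A.2 + t * B.2 := by
  obtain ⟨s, t, hs, ht, hst, rfl⟩ := h
  exact ⟨s, t, hs, ht, hst, by simp, by simp⟩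

lemma seg_dotp_le {n A B x : ℝ × ℝ} {h : ℝ} (hA : dotp n A ≤ h) (hB : dotp n B ≤ h)
    (hx : x ∈ segment ℝ A B) : dotp n x ≤ h := by
  obtain ⟨s, t, hs, ht, hst, h1, h2⟩ := mem_seg hx
  simp only [dotp] at *
  rw [h1, h2]
  have h3 := mul_le_mul_of_nonneg_left hA hs
  have h4 := mul_le_mul_of_nonneg_left hB ht
  have ht' : t = 1 - s := by linarith
  subst ht'
  nlinarith [h3, h4]

lemma dotp_sub (n x y : ℝ × ℝ) : dotp n (x - y) = dotp n x - dotp n y := by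
  simp [dotp, Prod.fst_sub, Prod.snd_sub]; ring

lemma dotp_add (n x y : ℝ × ℝ) : dotp n (x + y) = dotp n x + dotp n y := by
  simp [dotp, Prod.fst_add, Prod.snd_add]; ring

lemma dotp_smul (n : ℝ × ℝ) (c : ℝ) (x : ℝ × ℝ) : dotp n (c • x) = c * dotp n x := by
  simp [dotp, Prod.smul_fst, Prod.smul_snd, smul_eq_mul]; ring

lemma arc_fst_neg (a b Δ : ℝ) (ha : 0 < a) (hb : 0 < b) (hΔ1 : 1 < Δ) :
    ∀ x ∈ arcE a b Δ, x.1 < 0 := by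
  rintro x ⟨hxe, c2, c3, hc2, hc3, hg⟩
  have hE1 := congrArg Prod.fst hg
  have hE2 := congrArg Prod.snd hg
  simp [gradE, Prod.smul_fst, Prod.smul_snd, smul_eq_mul] at hE1 hE2
  have hsum : 2 * a * x.1 = (c2 + c3) * (1 - Δ) := by linarith
  have hx1 : x.1 ≤ 0 := by nlinarith
  rcases lt_or_eq_of_le hx1 with h | h
  · exact h
  · exfalso
    have hcc : c2 + c3 = 0 := by
      rcases eq_or_lt_of_le (by positivity : (0:ℝ) ≤ c2 + c3) with h' | h'
      · exact h'.symm
      · nlinarith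
    have hc20 : c2 = 0 := by linarith
    have hc30 : c3 = 0 := by linarith
    have hd : x.1 - x.2 = 0 := by
      rw [hc20, hc30] at hE2; nlinarith
    have hx2 : x.2 = x.1 := by linarith
    have : (1:ℝ) = 0 := by
      rw [← hxe, show eF a b x = a * x.1 ^ 2 + b * (x.1 - x.2) ^ 2 from rfl, hx2, h]; ring
    norm_num at this

lemma dotp_n2 (Δ : ℝ) (x : ℝ × ℝ) : dotp (1, -Δ) x = x.1 - Δ * x.2 := by
  simp [dotp]; ring
lemma dotp_n3 (Δ : ℝ) (x : ℝ × ℝ) : dotp (-Δ, 1) x = x.2 - Δ * x.1 := by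
  simp [dotp]; ring
lemma pos_aux (b d c Δ : ℝ) (hb : 0 < b) (hc : 0 < c) (hΔ : 0 < Δ)
    (h : -(2 * b * d) = c * (-Δ)) : 0 < d := by nlinarith
lemma neg_aux (b d c : ℝ) (hb : 0 < b) (hc : 0 < c)
    (h : -(2 * b * d) = c) : d < 0 := by nlinarith
lemma T1_neg (a b c Δ x d : ℝ) (ha : 0 < a) (hc : 0 < c) (hΔ : 1 < Δ)
    (h1 : 2 * a * x + 2 * b * d = c) (h2 : -(2 * b * d) = c * (-Δ)) : x < 0 := by nlinarith
lemma eF_sq1 (a b : ℝ) (x : ℝ × ℝ) (hx : eF a b x = 1) (hb : 0 ≤ b) : a * x.1 ^ 2 ≤ 1 := by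
  simp only [eF] at hx
  nlinarith [mul_nonneg hb (sq_nonneg (x.1 - x.2))]
lemma sq_le_aux (A t x : ℝ) (h1 : t ≤ x) (h2 : x ≤ 0) (h3 : A * t ^ 2 ≤ 1) (hA : 0 ≤ A) :
    A * x ^ 2 ≤ 1 := by
  nlinarith [mul_nonneg hA (mul_nonneg (sub_nonneg.mpr h1) (by linarith : (0:ℝ) ≤ -(t + x)))]
lemma arc_tangent (a b Δ : ℝ) (ha : 0 < a) (hb : 0 < b) (p : ℝ × ℝ) (c : ℝ) (n : ℝ × ℝ)
    (hcpos : 0 < c) (hpe : eF a b p = 1) (hgp : gradE a b p = c • n) :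
    ∀ x ∈ arcE a b Δ, dotp n x ≤ dotp n p := by
  intro x hx
  obtain ⟨hxe, -⟩ := hx
  have hexp := eF_expand a b p x
  rw [hgp] at hexp
  have hds : dotp (c • n) (x - p) = c * dotp n (x - p) := by
    simp [dotp, Prod.smul_fst, Prod.smul_snd, smul_eq_mul]; ring
  rw [hds, hxe, hpe] at hexp
  have hnn := eF_nonneg a b ha.le hb.le (x - p)
  have h1 : dotp n (x - p) ≤ 0 := by nlinarith
  rw [dotp_sub] at h1
  linarith
lemma nonpos_prod (t c Δ : ℝ) (ht : t < 0) (hc : 0 ≤ c) (hΔ : 1 ≤ Δ) :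
    -t * (c * (1 - Δ ^ 2)) ≤ 0 := by
  have h1 : 0 ≤ Δ ^ 2 - 1 := by nlinarith
  have h2 : 0 ≤ c * (Δ ^ 2 - 1) := mul_nonneg hc h1
  nlinarith [mul_nonneg (by linarith : (0:ℝ) ≤ -t) h2]
lemma seg_final (u₂ u₃ ε X Y δ : ℝ) (hu2 : 0 < u₂) (hu3 : 0 < u₃) (hε : 0 < ε)
    (hδ : δ = ε * (10 * (u₂ + u₃))) (h : X * u₂ ≤ u₂ * Y - δ) : X - Y < -(5 * ε) := by
  nlinarith [mul_pos hε hu2, mul_pos hε hu3]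
lemma arc_final (u₂ u₃ ε Y W S δ : ℝ) (hu2 : 0 < u₂) (hu3 : 0 < u₃) (hε : 0 < ε)
    (hδ : δ = ε * (10 * (u₂ + u₃))) (hS : 2 ≤ S * (u₂ + u₃)) (hSnn : 0 ≤ S)
    (h : W * 2 ≤ 2 * Y - S * δ) : W - Y < -(5 * ε) := by
  nlinarith [mul_le_mul_of_nonneg_right hS hε.le]
lemma caseB_final (zφ yφ r1 p1 y1 : ℝ) (hz : 0 < zφ) (hy : 0 < yφ) (hr : r1 < 0)
    (hp0 : p1 ≤ 0) (hsq : p1 ^ 2 ≤ r1 ^ 2) (h1 : y1 = zφ * r1) (h2 : y1 = yφ * p1) :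
    zφ ≤ yφ := by
  have hr1p1 : r1 ≤ p1 := by nlinarith
  nlinarith [mul_le_mul_of_nonneg_left hr1p1 hy.le]
lemma comb_pos {s t p q : ℝ} (hs : 0 ≤ s) (ht : 0 ≤ t) (hst : s + t = 1)
    (hp : 0 < p) (hq : 0 < q) : 0 < s * p + t * q := by
  rcases eq_or_lt_of_le hs with h | h
  · have h1 : t = 1 := by linarith
    rw [← h, h1]; simpa using hq
  · nlinarith [mul_pos h hp, mul_nonneg ht hq.le]
lemma sq_cmp (A p r : ℝ) (hA : 0 < A) (h1 : A * p ^ 2 ≤ 1) (h2 : A * r ^ 2 = 1) :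
    p ^ 2 ≤ r ^ 2 := by nlinarith
lemma rker_nonneg (b12 b23 b2 : ℝ) (h12 : 0 ≤ b12) (h23 : 0 ≤ b23) (hb2 : 0 ≤ b2)
    (hb2' : b2 ≤ 1) (y z : ℤ × ℤ) : 0 ≤ rker b12 b23 b2 y z := by
  have h1 : (0:ℝ) ≤ 1 - b2 := by linarith
  unfold rker
  have t1 : ∀ n : ℕ, (0:ℝ) ≤ b12 * (1 - b2) ^ n * b2 :=
    fun n => mul_nonneg (mul_nonneg h12 (pow_nonneg h1 n)) hb2
  have t2 : ∀ n : ℕ, (0:ℝ) ≤ b12 * (1 - b2) ^ n :=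
    fun n => mul_nonneg h12 (pow_nonneg h1 n)
  repeat' apply add_nonneg
  all_goals split_ifs <;> first
    | exact le_rfl
    | exact h12
    | exact h23
    | exact t1 _
    | exact t2 _

set_option maxHeartbeats 1600000 in
/-- Lemma about the domain `E₋ = {min(y₂,y₃) < 0}`: if `λ₁ < λ₂` and
`λ₁ < λ₃` then, for all sufficiently large `Δ`, there are `C > 0` and `ε > 0` such
that for every `y ∈ ℤ²` with `min(y₂,y₃) < 0` and `φ(y) > C`:
(a) `Σ_z r_{yz}(φ(z) − φ(y)) ≤ 0`, and
(b) `φ(y + (λ₂−λ₁, λ₃−λ₁)) − φ(y) < −5ε`. -/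
theorem stmt11 (l1 l2 l3 b12 b23 : ℝ)
    (hl1 : 0 < l1) (hl2 : 0 < l2) (hl3 : 0 < l3) (hb12 : 0 < b12) (hb23 : 0 < b23)
    (hsum : l1 + l2 + l3 + b12 + b23 = 1) (h12 : l1 < l2) (h13 : l1 < l3)
    (a b : ℝ) (ha : 0 < a) (hb : 0 < b) :
    ∃ Δ₀ > (0 : ℝ), ∀ Δ > Δ₀, ∀ u₂ u₃ : ℝ, ∀ T₂ T₃ : ℝ × ℝ,
      GoodConfig a b Δ u₂ u₃ T₂ T₃ →
      ∀ φ : ℝ × ℝ → ℝ, IsPhi (contourL a b Δ u₂ u₃ T₂ T₃) φ →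
      ∃ C > (0 : ℝ), ∃ ε > (0 : ℝ), ∀ y : ℤ × ℤ, min y.1 y.2 < 0 → C < φ (iv y) →
        (∑' z : ℤ × ℤ, rker b12 b23 (l2 / (l2 + b12)) y z * (φ (iv z) - φ (iv y))) ≤ 0 ∧
        φ (iv y + ((l2 - l1, l3 - l1) : ℝ × ℝ)) - φ (iv y) < -(5 * ε) := by
  have hv1 : (0:ℝ) < l2 - l1 := by linarith
  have hv2 : (0:ℝ) < l3 - l1 := by linarith
  set v1 : ℝ := l2 - l1 with hv1d
  set v2 : ℝ := l3 - l1 with hv2d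
  have hv1lt : v1 < 1 := by rw [hv1d]; linarith
  have hv2lt : v2 < 1 := by rw [hv2d]; linarith
  refine ⟨1 + v1 / v2 + v2 / v1, by positivity, ?_⟩
  intro Δ hΔ u₂ u₃ T₂ T₃ hcfg φ hφ
  obtain ⟨⟨hT2e, hT2y, c2, hc2, hg2⟩, ⟨hT3e, hT3x, hT3y, c3, hc3, hg3⟩, hu2, hu3, hd2, hd3⟩ := hcfg
  obtain ⟨hφ0, hφp⟩ := hφ
  have hc2R : (0:ℝ) < (c2:ℝ) := by exact_mod_cast hc2
  have hc3R : (0:ℝ) < (c3:ℝ) := by exact_mod_cast hc3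
  have hg2R : gradE a b T₂ = ((c2:ℝ)) • ((1, -Δ) : ℝ × ℝ) := by
    rw [hg2, Nat.cast_smul_eq_nsmul]
  have hg3R : gradE a b T₃ = ((c3:ℝ)) • ((-Δ, 1) : ℝ × ℝ) := by
    rw [hg3, Nat.cast_smul_eq_nsmul]
  clear hg2 hg3
  have hdv1 : 0 < v1 / v2 := by positivity
  have hdv2 : 0 < v2 / v1 := by positivity
  have hΔ1 : 1 < Δ := by linarith
  have hΔ0 : 0 < Δ := by linarith
  have hΔv1 : v1 < Δ * v2 := by
    have h1 : v1 / v2 < Δ := by linarith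
    have := mul_lt_mul_of_pos_right h1 hv2
    rwa [div_mul_cancel₀ _ (ne_of_gt hv2)] at this
  have hΔv2 : v2 < Δ * v1 := by
    have h1 : v2 / v1 < Δ := by linarith
    have := mul_lt_mul_of_pos_right h1 hv1
    rwa [div_mul_cancel₀ _ (ne_of_gt hv1)] at this
  -- gradient components at T₂ and T₃
  have hg21 : 2 * a * T₂.1 + 2 * b * (T₂.1 - T₂.2) = (c2:ℝ) := by
    have := congrArg Prod.fst hg2R
    simpa [gradE, Prod.smul_fst, smul_eq_mul] using this
  have hg22 : -(2 * b * (T₂.1 - T₂.2)) = (c2:ℝ) * (-Δ) := by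
    have := congrArg Prod.snd hg2R
    simpa [gradE, Prod.smul_snd, smul_eq_mul] using this
  have hg31 : 2 * a * T₃.1 + 2 * b * (T₃.1 - T₃.2) = (c3:ℝ) * (-Δ) := by
    have := congrArg Prod.fst hg3R
    simpa [gradE, Prod.smul_fst, smul_eq_mul] using this
  have hg32 : -(2 * b * (T₃.1 - T₃.2)) = (c3:ℝ) := by
    have := congrArg Prod.snd hg3R
    simpa [gradE, Prod.smul_snd, smul_eq_mul] using this
  have hT2d : 0 < T₂.1 - T₂.2 := pos_aux b _ _ Δ hb hc2R hΔ0 hg22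
  have hT3d : T₃.1 - T₃.2 < 0 := neg_aux b _ _ hb hc3R hg32
  have hT21 : T₂.1 < 0 := T1_neg a b (c2:ℝ) Δ T₂.1 (T₂.1 - T₂.2) ha hc2R hΔ1 hg21 hg22
  -- the intercept identities
  have hu2e : u₂ = T₂.1 - Δ * T₂.2 := by
    rw [hg2R] at hd2
    simp only [dotp, Prod.fst_sub, Prod.snd_sub, Prod.smul_fst, Prod.smul_snd,
      smul_eq_mul] at hd2
    have h0 : (c2:ℝ) * (u₂ - (T₂.1 - Δ * T₂.2)) = 0 := by linarith [hd2]
    rcases mul_eq_zero.mp h0 with h | h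
    · exact absurd h (ne_of_gt hc2R)
    · linarith
  have hu3e : u₃ = T₃.2 - Δ * T₃.1 := by
    rw [hg3R] at hd3
    simp only [dotp, Prod.fst_sub, Prod.snd_sub, Prod.smul_fst, Prod.smul_snd,
      smul_eq_mul] at hd3
    have h0 : (c3:ℝ) * (u₃ - (T₃.2 - Δ * T₃.1)) = 0 := by linarith [hd3]
    rcases mul_eq_zero.mp h0 with h | h
    · exact absurd h (ne_of_gt hc3R)
    · linarith
  -- memberships
  have hT2arc : T₂ ∈ arcE a b Δ := by
    refine ⟨hT2e, (c2:ℝ), 0, hc2R.le, le_rfl, ?_⟩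
    rw [hg2R]; simp
  have hT3arc : T₃ ∈ arcE a b Δ := by
    refine ⟨hT3e, 0, (c3:ℝ), le_rfl, hc3R.le, ?_⟩
    rw [hg3R]; simp
  -- generic supporting-line bound on the contour
  have key : ∀ (n : ℝ × ℝ) (h : ℝ), (∀ x ∈ arcE a b Δ, dotp n x ≤ h) →
      dotp n ((u₂, 0) : ℝ × ℝ) ≤ h → dotp n ((0, u₃) : ℝ × ℝ) ≤ h →
      ∀ x ∈ contourL a b Δ u₂ u₃ T₂ T₃, dotp n x ≤ h := by
    intro n h harc hK2 hK3 x hx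
    rcases hx with ((hx | hx) | hx) | hx
    · exact seg_dotp_le hK3 hK2 hx
    · exact seg_dotp_le hK2 (harc _ hT2arc) hx
    · exact harc _ hx
    · exact seg_dotp_le (harc _ hT3arc) hK3 hx
  have phi_ge : ∀ (n : ℝ × ℝ) (h : ℝ), (∀ x ∈ contourL a b Δ u₂ u₃ T₂ T₃, dotp n x ≤ h) →
      ∀ x : ℝ × ℝ, x ≠ 0 → dotp n x ≤ h * φ x := by
    intro n h hL x hx0
    obtain ⟨hpos, hmem⟩ := hφp x hx0
    have h1 := hL _ hmem
    rw [dotp_smul] at h1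
    have h2 := mul_le_mul_of_nonneg_left h1 hpos.le
    rw [← mul_assoc, mul_inv_cancel₀ (ne_of_gt hpos), one_mul] at h2
    linarith
  have hdT2 : dotp ((1, -Δ) : ℝ × ℝ) T₂ = u₂ := by rw [dotp_n2, hu2e]
  have hdT3 : dotp ((-Δ, 1) : ℝ × ℝ) T₃ = u₃ := by rw [dotp_n3, hu3e]
  have hb2L : ∀ x ∈ contourL a b Δ u₂ u₃ T₂ T₃, dotp ((1, -Δ) : ℝ × ℝ) x ≤ u₂ := by
    apply key
    · intro x hx
      have := arc_tangent a b Δ ha hb T₂ (c2:ℝ) (1, -Δ) hc2R hT2e hg2R x hx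
      rwa [hdT2] at this
    · rw [dotp_n2]; simp
    · rw [dotp_n2]
      have := mul_pos hΔ0 hu3
      simp only []
      linarith [mul_pos hΔ0 hu3]
  have hb3L : ∀ x ∈ contourL a b Δ u₂ u₃ T₂ T₃, dotp ((-Δ, 1) : ℝ × ℝ) x ≤ u₃ := by
    apply key
    · intro x hx
      have := arc_tangent a b Δ ha hb T₃ (c3:ℝ) (-Δ, 1) hc3R hT3e hg3R x hx
      rwa [hdT3] at this
    · rw [dotp_n3]
      simp only []
      linarith [mul_pos hΔ0 hu2]
    · rw [dotp_n3]; simp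
  -- first-coordinate square bound on the contour (for x.1 ≤ 0)
  have haT2 : a * T₂.1 ^ 2 ≤ 1 := eF_sq1 a b T₂ hT2e hb.le
  have haT3 : a * T₃.1 ^ 2 ≤ 1 := eF_sq1 a b T₃ hT3e hb.le
  have hL1sq : ∀ x ∈ contourL a b Δ u₂ u₃ T₂ T₃, x.1 ≤ 0 → a * x.1 ^ 2 ≤ 1 := by
    intro x hx hx1
    rcases hx with ((hx | hx) | hx) | hx
    · obtain ⟨s, t, hs, ht, hst, h1, h2⟩ := mem_seg hx
      have h3 : 0 ≤ x.1 := by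
        rw [h1]; simp only []
        have := mul_nonneg ht hu2.le
        linarith [mul_nonneg ht hu2.le]
      have h4 : x.1 = 0 := le_antisymm hx1 h3
      rw [h4]; norm_num
    · obtain ⟨s, t, hs, ht, hst, h1, h2⟩ := mem_seg hx
      have hT2le : T₂.1 ≤ x.1 := by
        have ht' : t = 1 - s := by linarith
        rw [h1, ht']
        simp only []
        linarith [mul_nonneg hs (by linarith : (0:ℝ) ≤ u₂ - T₂.1)]
      exact sq_le_aux a T₂.1 x.1 hT2le hx1 haT2 ha.le
    · exact eF_sq1 a b x hx.1 hb.le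
    · obtain ⟨s, t, hs, ht, hst, h1, h2⟩ := mem_seg hx
      have hT3le : T₃.1 ≤ x.1 := by
        have hs' : s = 1 - t := by linarith
        rw [h1, hs']
        simp only []
        linarith [mul_nonneg ht (by linarith : (0:ℝ) ≤ -T₃.1)]
      exact sq_le_aux a T₃.1 x.1 hT3le hx1 haT3 ha.le
  -- the constants
  set δv : ℝ := min (Δ * v2 - v1) (Δ * v1 - v2) with hδvd
  have hδv : 0 < δv := lt_min (by linarith) (by linarith)
  have hδle1 : δv ≤ Δ * v2 - v1 := min_le_left _ _
  have hδle2 : δv ≤ Δ * v1 - v2 := min_le_right _ _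
  have hu23 : (0:ℝ) < 10 * (u₂ + u₃) := by linarith
  set ε : ℝ := δv / (10 * (u₂ + u₃)) with hεd
  have hε : 0 < ε := div_pos hδv hu23
  have hδveq : δv = ε * (10 * (u₂ + u₃)) := by
    rw [hεd, div_mul_cancel₀ _ (ne_of_gt hu23)]
  clear_value v1 v2 δv ε
  refine ⟨1, one_pos, ε, hε, ?_⟩
  intro y hymin hyC
  have hyneg : y.1 < 0 ∨ y.2 < 0 := min_lt_iff.mp hymin
  have hivy : iv y ≠ 0 := by
    intro h
    have h1 := congrArg Prod.fst h
    have h2 := congrArg Prod.snd h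
    simp only [iv, Prod.fst_zero, Prod.snd_zero, Int.cast_eq_zero] at h1 h2
    rcases hyneg with h3 | h3 <;> omega
  obtain ⟨hφy, hymem⟩ := hφp (iv y) hivy
  have hivy1 : (iv y).1 = (y.1 : ℝ) := rfl
  have hivy2 : (iv y).2 = (y.2 : ℝ) := rfl
  constructor
  · -- part (a)
    by_cases hy1 : 0 < y.1
    · -- rollback to (0, y.2)
      have hy2 : y.2 < 0 := by
        rcases hyneg with h | h
        · omega
        · exact h
      have hivz : iv ((0:ℤ), y.2) = ((0:ℝ), (y.2:ℝ)) := by simp [iv]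
      have hz0 : iv ((0:ℤ), y.2) ≠ 0 := by
        rw [hivz]; intro h
        have h2 := congrArg Prod.snd h
        simp only [Prod.snd_zero, Int.cast_eq_zero] at h2
        omega
      obtain ⟨hφz, hzmem⟩ := hφp _ hz0
      have hy2R : ((y.2:ℝ)) < 0 := by exact_mod_cast hy2
      have hφzinv : 0 < (φ (iv ((0:ℤ), y.2)))⁻¹ := inv_pos.mpr hφz
      have hr1 : ((φ (iv ((0:ℤ), y.2)))⁻¹ • iv ((0:ℤ), y.2)).1 = 0 := by
        rw [hivz]; simp
      have hr2 : ((φ (iv ((0:ℤ), y.2)))⁻¹ • iv ((0:ℤ), y.2)).2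
          = (φ (iv ((0:ℤ), y.2)))⁻¹ * (y.2:ℝ) := by rw [hivz]; simp
      have hr2neg : ((φ (iv ((0:ℤ), y.2)))⁻¹ • iv ((0:ℤ), y.2)).2 < 0 := by
        rw [hr2]; exact mul_neg_of_pos_of_neg hφzinv hy2R
      -- identify the piece: must be the segment K₂T₂
      have hcomp : φ (iv ((0:ℤ), y.2)) ≤ φ (iv y) := by
        rcases hzmem with ((hq | hq) | hq) | hq
        · exfalso
          obtain ⟨s, t, hs, ht, hst, h1, h2⟩ := mem_seg hq
          rw [hr2] at h2
          simp only [] at h2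
          have := mul_nonneg hs hu3.le
          have h5 : (φ (iv ((0:ℤ), y.2)))⁻¹ * (y.2:ℝ) < 0 :=
            mul_neg_of_pos_of_neg hφzinv hy2R
          linarith [h2, this]
        · -- segment K₂ T₂
          have hdq : dotp ((1, -Δ) : ℝ × ℝ) ((φ (iv ((0:ℤ), y.2)))⁻¹ • iv ((0:ℤ), y.2)) = u₂ := by
            obtain ⟨s, t, hs, ht, hst, h1, h2⟩ := mem_seg hq
            rw [dotp_n2, h1, h2]
            simp only []
            linear_combination (-t) * hu2e + u₂ * hst
          rw [dotp_smul, dotp_n2] at hdq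
          have e1 : (iv ((0:ℤ), y.2)).1 = 0 := by simp [iv]
          have e2 : (iv ((0:ℤ), y.2)).2 = (y.2:ℝ) := by simp [iv]
          rw [e1, e2] at hdq
          -- hdq : (φ z)⁻¹ * (0 - Δ * y.2) = u₂
          have hzval : -(Δ * (y.2:ℝ)) = φ (iv ((0:ℤ), y.2)) * u₂ := by
            have h := congrArg (fun r => φ (iv ((0:ℤ), y.2)) * r) hdq
            simp only [mul_inv_cancel_left₀ (ne_of_gt hφz)] at h
            linarith [h]
          have hylow := phi_ge _ _ hb2L (iv y) hivy
          rw [dotp_n2, hivy1, hivy2] at hylow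
          have hy1R : (0:ℝ) < (y.1:ℝ) := by exact_mod_cast hy1
          have : φ (iv ((0:ℤ), y.2)) * u₂ < u₂ * φ (iv y) := by linarith
          have := lt_of_mul_lt_mul_right (by linarith [this] :
            φ (iv ((0:ℤ), y.2)) * u₂ < φ (iv y) * u₂) hu2.le
          linarith
        · exfalso
          have := arc_fst_neg a b Δ ha hb hΔ1 _ hq
          rw [hr1] at this
          exact lt_irrefl _ this
        · exfalso
          obtain ⟨s, t, hs, ht, hst, h1, h2⟩ := mem_seg hq
          rw [hr1] at h1
          rw [hr2] at h2
          simp only [] at h1 h2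
          have hs0 : s = 0 := by
            rcases mul_eq_zero.mp (by linarith [h1] : s * T₃.1 = 0) with h | h
            · exact h
            · exact absurd h (ne_of_lt hT3x)
          have ht1 : t = 1 := by linarith
          rw [hs0, ht1] at h2
          have h5 : (φ (iv ((0:ℤ), y.2)))⁻¹ * (y.2:ℝ) < 0 :=
            mul_neg_of_pos_of_neg hφzinv hy2R
          linarith [h2, h5]
      -- now compute the sum
      have hrk : ∀ z : ℤ × ℤ, z ≠ ((0:ℤ), y.2) →
          rker b12 b23 (l2 / (l2 + b12)) y z * (φ (iv z) - φ (iv y)) = 0 := by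
        intro z hz
        have hc1 : ¬(0 < y.1 ∧ y.2 ≤ 0 ∧ z = ((0:ℤ), y.2)) := by
          rintro ⟨-, -, h⟩; exact hz h
        have hc2' : ¬(y.1 < y.2 ∧ z = (y.1, y.1)) := by rintro ⟨h, -⟩; omega
        have hc3' : ¬(0 < y.2 ∧ y.2 ≤ y.1 ∧ z.1 = 0 ∧ 0 ≤ z.2 ∧ z.2 < y.2) := by
          rintro ⟨h, -⟩; omega
        have hc4' : ¬(0 < y.2 ∧ y.2 ≤ y.1 ∧ z = ((0:ℤ), y.2)) := by rintro ⟨h, -⟩; omega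
        have hc5' : ¬(0 < y.1 ∧ y.1 < y.2 ∧ z.1 = 0 ∧ 0 ≤ z.2 ∧ z.2 ≤ y.1) := by
          rintro ⟨-, h, -⟩; omega
        have hc6' : ¬(0 < y.1 ∧ y.1 < y.2 ∧ z = ((0:ℤ), y.2)) := by rintro ⟨-, h, -⟩; omega
        simp only [rker, if_neg hc1, if_neg hc2', if_neg hc3', if_neg hc4', if_neg hc5',
          if_neg hc6']
        ring
      rw [tsum_eq_single ((0:ℤ), y.2) hrk]
      have hd : φ (iv ((0:ℤ), y.2)) - φ (iv y) ≤ 0 := by linarith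
      exact mul_nonpos_iff.mpr (Or.inl
        ⟨rker_nonneg b12 b23 (l2 / (l2 + b12)) hb12.le hb23.le
          (by positivity) (by rw [div_le_one (by linarith)]; linarith) y _, hd⟩)
    · by_cases hy12 : y.1 < y.2
      · -- rollback to (y.1, y.1)
        have hy1neg : y.1 < 0 := by
          rcases hyneg with h | h
          · exact h
          · omega
        have hivz : iv (y.1, y.1) = ((y.1:ℝ), (y.1:ℝ)) := by simp [iv]
        have hy1R : ((y.1:ℝ)) < 0 := by exact_mod_cast hy1neg
        have hz0 : iv (y.1, y.1) ≠ 0 := by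
          rw [hivz]; intro h
          have h2 := congrArg Prod.fst h
          simp only [Prod.fst_zero, Int.cast_eq_zero] at h2
          omega
        obtain ⟨hφz, hzmem⟩ := hφp _ hz0
        have hφzinv : 0 < (φ (iv (y.1, y.1)))⁻¹ := inv_pos.mpr hφz
        have hr1 : ((φ (iv (y.1, y.1)))⁻¹ • iv (y.1, y.1)).1
            = (φ (iv (y.1, y.1)))⁻¹ * (y.1:ℝ) := by rw [hivz]; simp
        have hr2 : ((φ (iv (y.1, y.1)))⁻¹ • iv (y.1, y.1)).2
            = (φ (iv (y.1, y.1)))⁻¹ * (y.1:ℝ) := by rw [hivz]; simp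
        have hrneg : (φ (iv (y.1, y.1)))⁻¹ * (y.1:ℝ) < 0 :=
          mul_neg_of_pos_of_neg hφzinv hy1R
        have hcomp : φ (iv (y.1, y.1)) ≤ φ (iv y) := by
          rcases hzmem with ((hq | hq) | hq) | hq
          · exfalso
            obtain ⟨s, t, hs, ht, hst, h1, h2⟩ := mem_seg hq
            rw [hr1] at h1
            simp only [] at h1
            linarith [mul_nonneg ht hu2.le, hrneg, h1]
          · exfalso
            obtain ⟨s, t, hs, ht, hst, h1, h2⟩ := mem_seg hq
            rw [hr1] at h1; rw [hr2] at h2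
            simp only [] at h1 h2
            have := comb_pos hs ht hst hu2 hT2d
            -- h1 - h2 : 0 = s*(u₂ - 0) + t*(T₂.1 - T₂.2) > 0
            linarith [this, h1, h2]
          · -- arc: the rep is (-1/√a, -1/√a)
            obtain ⟨hqe, -⟩ := hq
            simp only [eF, hr1, hr2] at hqe
            -- a * r² = 1
            have hp := hφp (iv y) hivy
            have hpmem := hp.2
            have hp1 : ((φ (iv y))⁻¹ • iv y).1 = (φ (iv y))⁻¹ * (y.1:ℝ) := by simp [hivy1]
            have hp1neg : ((φ (iv y))⁻¹ • iv y).1 < 0 := by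
              rw [hp1]; exact mul_neg_of_pos_of_neg (inv_pos.mpr hφy) hy1R
            have hsq := hL1sq _ hpmem hp1neg.le
            have hrsq : a * ((φ (iv (y.1, y.1)))⁻¹ * (y.1:ℝ)) ^ 2 = 1 := by
              rw [← hqe]; ring
            -- compare
            have hy1e : (y.1:ℝ) = φ (iv (y.1, y.1)) * ((φ (iv (y.1, y.1)))⁻¹ * (y.1:ℝ)) := by
              rw [← mul_assoc, mul_inv_cancel₀ (ne_of_gt hφz), one_mul]
            have hy1e' : (y.1:ℝ) = φ (iv y) * ((φ (iv y))⁻¹ * (y.1:ℝ)) := by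
              rw [← mul_assoc, mul_inv_cancel₀ (ne_of_gt hφy), one_mul]
            have hsq' : ((φ (iv y))⁻¹ * (y.1:ℝ)) ^ 2
                ≤ ((φ (iv (y.1, y.1)))⁻¹ * (y.1:ℝ)) ^ 2 := by
              rw [hp1] at hsq
              exact sq_cmp a _ _ ha hsq hrsq
            exact caseB_final _ _ _ _ _ hφz hφy hrneg (by rw [hp1] at hp1neg; exact hp1neg.le)
              hsq' hy1e hy1e'
          · exfalso
            obtain ⟨s, t, hs, ht, hst, h1, h2⟩ := mem_seg hq
            rw [hr1] at h1; rw [hr2] at h2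
            simp only [] at h1 h2
            have := comb_pos hs ht hst (by linarith : (0:ℝ) < -(T₃.1 - T₃.2)) hu3
            linarith [this, h1, h2]
        have hrk : ∀ z : ℤ × ℤ, z ≠ (y.1, y.1) →
            rker b12 b23 (l2 / (l2 + b12)) y z * (φ (iv z) - φ (iv y)) = 0 := by
          intro z hz
          have hc1 : ¬(0 < y.1 ∧ y.2 ≤ 0 ∧ z = ((0:ℤ), y.2)) := by rintro ⟨h, -⟩; omega
          have hc2' : ¬(y.1 < y.2 ∧ z = (y.1, y.1)) := by rintro ⟨-, h⟩; exact hz h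
          have hc3' : ¬(0 < y.2 ∧ y.2 ≤ y.1 ∧ z.1 = 0 ∧ 0 ≤ z.2 ∧ z.2 < y.2) := by
            rintro ⟨h, h', -⟩; omega
          have hc4' : ¬(0 < y.2 ∧ y.2 ≤ y.1 ∧ z = ((0:ℤ), y.2)) := by
            rintro ⟨h, h', -⟩; omega
          have hc5' : ¬(0 < y.1 ∧ y.1 < y.2 ∧ z.1 = 0 ∧ 0 ≤ z.2 ∧ z.2 ≤ y.1) := by
            rintro ⟨h, -⟩; omega
          have hc6' : ¬(0 < y.1 ∧ y.1 < y.2 ∧ z = ((0:ℤ), y.2)) := by rintro ⟨h, -⟩; omega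
          simp only [rker, if_neg hc1, if_neg hc2', if_neg hc3', if_neg hc4', if_neg hc5',
            if_neg hc6']
          ring
        rw [tsum_eq_single (y.1, y.1) hrk]
        have hd : φ (iv (y.1, y.1)) - φ (iv y) ≤ 0 := by linarith
        exact mul_nonpos_iff.mpr (Or.inl
          ⟨rker_nonneg b12 b23 (l2 / (l2 + b12)) hb12.le hb23.le
            (by positivity) (by rw [div_le_one (by linarith)]; linarith) y _, hd⟩)
      · -- no rollback transition at all
        have hrk : ∀ z : ℤ × ℤ,
            rker b12 b23 (l2 / (l2 + b12)) y z * (φ (iv z) - φ (iv y)) = 0 := by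
          intro z
          have hc1 : ¬(0 < y.1 ∧ y.2 ≤ 0 ∧ z = ((0:ℤ), y.2)) := by rintro ⟨h, -⟩; omega
          have hc2' : ¬(y.1 < y.2 ∧ z = (y.1, y.1)) := by rintro ⟨h, -⟩; omega
          have hc3' : ¬(0 < y.2 ∧ y.2 ≤ y.1 ∧ z.1 = 0 ∧ 0 ≤ z.2 ∧ z.2 < y.2) := by
            rintro ⟨h, h', -⟩; omega
          have hc4' : ¬(0 < y.2 ∧ y.2 ≤ y.1 ∧ z = ((0:ℤ), y.2)) := by
            rintro ⟨h, h', -⟩; omega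
          have hc5' : ¬(0 < y.1 ∧ y.1 < y.2 ∧ z.1 = 0 ∧ 0 ≤ z.2 ∧ z.2 ≤ y.1) := by
            rintro ⟨h, -⟩; omega
          have hc6' : ¬(0 < y.1 ∧ y.1 < y.2 ∧ z = ((0:ℤ), y.2)) := by rintro ⟨h, -⟩; omega
          simp only [rker, if_neg hc1, if_neg hc2', if_neg hc3', if_neg hc4', if_neg hc5',
            if_neg hc6']
          ring
        have : (∑' z : ℤ × ℤ, rker b12 b23 (l2 / (l2 + b12)) y z * (φ (iv z) - φ (iv y)))
            = 0 := by
          rw [tsum_congr hrk]; exact tsum_zero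
        rw [this]
  · -- part (b)
    have hwneg : ((iv y + ((v1, v2) : ℝ × ℝ)).1 < 0 ∨ (iv y + ((v1, v2) : ℝ × ℝ)).2 < 0) := by
      rcases hyneg with h | h
      · left
        have h1 : (y.1:ℝ) ≤ -1 := by exact_mod_cast (by omega : y.1 ≤ -1)
        simp only [Prod.fst_add, hivy1]
        linarith
      · right
        have h1 : (y.2:ℝ) ≤ -1 := by exact_mod_cast (by omega : y.2 ≤ -1)
        simp only [Prod.snd_add, hivy2]
        linarith
    set w : ℝ × ℝ := iv y + ((v1, v2) : ℝ × ℝ) with hwd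
    have hw0 : w ≠ 0 := by
      intro h
      rw [h] at hwneg
      simp only [Prod.fst_zero, Prod.snd_zero] at hwneg
      rcases hwneg with h' | h' <;> exact lt_irrefl _ h'
    obtain ⟨hφw, hwmem⟩ := hφp w hw0
    have hwinv : 0 < (φ w)⁻¹ := inv_pos.mpr hφw
    have hbridge : ∀ n : ℝ × ℝ, φ w * dotp n ((φ w)⁻¹ • w) = dotp n w := by
      intro n
      rw [dotp_smul, mul_inv_cancel_left₀ (ne_of_gt hφw)]
    have hsplit2 : dotp ((1, -Δ) : ℝ × ℝ) w
        = dotp ((1, -Δ) : ℝ × ℝ) (iv y) + (v1 - Δ * v2) := by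
      rw [hwd]
      simp only [dotp, Prod.fst_add, Prod.snd_add]
      ring
    have hsplit3 : dotp ((-Δ, 1) : ℝ × ℝ) w
        = dotp ((-Δ, 1) : ℝ × ℝ) (iv y) + (v2 - Δ * v1) := by
      rw [hwd]
      simp only [dotp, Prod.fst_add, Prod.snd_add]
      ring
    rcases hwmem with ((hq | hq) | hq) | hq
    · -- chord: impossible
      exfalso
      obtain ⟨s, t, hs, ht, hst, h1, h2⟩ := mem_seg hq
      have hq1 : ((φ w)⁻¹ • w).1 = (φ w)⁻¹ * w.1 := by simp
      have hq2 : ((φ w)⁻¹ • w).2 = (φ w)⁻¹ * w.2 := by simp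
      rw [hq1] at h1; rw [hq2] at h2
      simp only [] at h1 h2
      rcases hwneg with h' | h'
      · have := mul_neg_of_pos_of_neg hwinv h'
        linarith [mul_nonneg ht hu2.le, this, h1]
      · have := mul_neg_of_pos_of_neg hwinv h'
        linarith [mul_nonneg hs hu3.le, this, h2]
    · -- segment K₂T₂
      have hdq : dotp ((1, -Δ) : ℝ × ℝ) ((φ w)⁻¹ • w) = u₂ := by
        obtain ⟨s, t, hs, ht, hst, h1, h2⟩ := mem_seg hq
        rw [dotp_n2, h1, h2]
        simp only []
        linear_combination (-t) * hu2e + u₂ * hst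
      have hwdot : dotp ((1, -Δ) : ℝ × ℝ) w = φ w * u₂ := by
        rw [← hbridge, hdq]
      have hylow := phi_ge _ _ hb2L (iv y) hivy
      have hfin : φ w * u₂ ≤ u₂ * φ (iv y) - δv := by
        linarith [hwdot, hsplit2, hylow, hδle1]
      exact seg_final u₂ u₃ ε (φ w) (φ (iv y)) δv hu2 hu3 hε hδveq hfin
    · -- arc
      obtain ⟨hqe, cc2, cc3, hcc2, hcc3, hgq⟩ := hq
      have hgq1 : (gradE a b ((φ w)⁻¹ • w)).1 = cc2 - cc3 * Δ := by
        rw [hgq]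
        simp [Prod.fst_add, Prod.smul_fst, smul_eq_mul]
        ring
      have hgq2 : (gradE a b ((φ w)⁻¹ • w)).2 = cc3 - cc2 * Δ := by
        rw [hgq]
        simp [Prod.snd_add, Prod.smul_snd, smul_eq_mul]
        ring
      have hdotgq : ∀ x : ℝ × ℝ, dotp (gradE a b ((φ w)⁻¹ • w)) x
          = (cc2 - cc3 * Δ) * x.1 + (cc3 - cc2 * Δ) * x.2 := by
        intro x
        simp only [dotp, hgq1, hgq2]
      have hself : dotp (gradE a b ((φ w)⁻¹ • w)) ((φ w)⁻¹ • w) = 2 := by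
        rw [dotp_grad_self, hqe]; ring
      have harcq : ∀ x ∈ arcE a b Δ, dotp (gradE a b ((φ w)⁻¹ • w)) x ≤ 2 := by
        intro x hx
        obtain ⟨hxe, -⟩ := hx
        have hexp := eF_expand a b ((φ w)⁻¹ • w) x
        rw [hxe, hqe, dotp_sub, hself] at hexp
        have hnn := eF_nonneg a b ha.le hb.le (x - (φ w)⁻¹ • w)
        linarith
      have hT2le2 := harcq T₂ hT2arc
      have hT3le2 := harcq T₃ hT3arc
      have hK2le2 : dotp (gradE a b ((φ w)⁻¹ • w)) ((u₂, 0) : ℝ × ℝ) ≤ 2 := by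
        have hdiff : dotp (gradE a b ((φ w)⁻¹ • w)) ((u₂, 0) : ℝ × ℝ)
            = dotp (gradE a b ((φ w)⁻¹ • w)) T₂ + (-T₂.2) * (cc3 * (1 - Δ ^ 2)) := by
          rw [hdotgq, hdotgq]
          simp only []
          rw [hu2e]; ring
        linarith [hdiff, nonpos_prod T₂.2 cc3 Δ hT2y hcc3 hΔ1.le, hT2le2]
      have hK3le2 : dotp (gradE a b ((φ w)⁻¹ • w)) ((0, u₃) : ℝ × ℝ) ≤ 2 := by
        have hdiff : dotp (gradE a b ((φ w)⁻¹ • w)) ((0, u₃) : ℝ × ℝ)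
            = dotp (gradE a b ((φ w)⁻¹ • w)) T₃ + (-T₃.1) * (cc2 * (1 - Δ ^ 2)) := by
          rw [hdotgq, hdotgq]
          simp only []
          rw [hu3e]; ring
        linarith [hdiff, nonpos_prod T₃.1 cc2 Δ hT3x hcc2 hΔ1.le, hT3le2]
      have hbqL := key _ 2 harcq hK2le2 hK3le2
      have hylow := phi_ge _ 2 hbqL (iv y) hivy
      have hwdot : dotp (gradE a b ((φ w)⁻¹ • w)) w = φ w * 2 := by
        rw [← hbridge, hself]
      have hqarc : ((φ w)⁻¹ • w) ∈ arcE a b Δ := ⟨hqe, cc2, cc3, hcc2, hcc3, hgq⟩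
      have hqL : ((φ w)⁻¹ • w) ∈ contourL a b Δ u₂ u₃ T₂ T₃ :=
        Set.mem_union_left _ (Set.mem_union_right _ hqarc)
      have hq2u : dotp ((1, -Δ) : ℝ × ℝ) ((φ w)⁻¹ • w) ≤ u₂ := hb2L _ hqL
      have hq3u : dotp ((-Δ, 1) : ℝ × ℝ) ((φ w)⁻¹ • w) ≤ u₃ := hb3L _ hqL
      have hcomb : dotp (gradE a b ((φ w)⁻¹ • w)) ((φ w)⁻¹ • w)
          = cc2 * dotp ((1, -Δ) : ℝ × ℝ) ((φ w)⁻¹ • w)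
            + cc3 * dotp ((-Δ, 1) : ℝ × ℝ) ((φ w)⁻¹ • w) := by
        rw [hdotgq, dotp_n2, dotp_n3]; ring
      have hcclow : 2 ≤ cc2 * u₂ + cc3 * u₃ := by
        have h1 := mul_le_mul_of_nonneg_left hq2u hcc2
        have h2 := mul_le_mul_of_nonneg_left hq3u hcc3
        linarith [hself, hcomb, h1, h2]
      have hS : 2 ≤ (cc2 + cc3) * (u₂ + u₃) := by
        have h1 := mul_nonneg hcc2 hu3.le
        have h2 := mul_nonneg hcc3 hu2.le
        linarith [hcclow, h1, h2]
      have hsplitg : dotp (gradE a b ((φ w)⁻¹ • w)) w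
          = dotp (gradE a b ((φ w)⁻¹ • w)) (iv y)
            + (cc2 * (v1 - Δ * v2) + cc3 * (v2 - Δ * v1)) := by
        simp only [dotp, hgq1, hgq2]
        rw [hwd]
        simp only [Prod.fst_add, Prod.snd_add]
        ring
      have hvle : cc2 * (v1 - Δ * v2) + cc3 * (v2 - Δ * v1) ≤ -((cc2 + cc3) * δv) := by
        have h1 := mul_le_mul_of_nonneg_left (by linarith : v1 - Δ * v2 ≤ -δv) hcc2
        have h2 := mul_le_mul_of_nonneg_left (by linarith : v2 - Δ * v1 ≤ -δv) hcc3
        linarith [h1, h2]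
      have hfin : φ w * 2 ≤ 2 * φ (iv y) - (cc2 + cc3) * δv := by
        linarith [hwdot, hsplitg, hylow, hvle]
      exact arc_final u₂ u₃ ε (φ (iv y)) (φ w) (cc2 + cc3) δv hu2 hu3 hε hδveq hS
        (by linarith) hfin
    · -- segment T₃K₃
      have hdq : dotp ((-Δ, 1) : ℝ × ℝ) ((φ w)⁻¹ • w) = u₃ := by
        obtain ⟨s, t, hs, ht, hst, h1, h2⟩ := mem_seg hq
        rw [dotp_n3, h1, h2]
        simp only []
        linear_combination (-s) * hu3e + u₃ * hst
      have hwdot : dotp ((-Δ, 1) : ℝ × ℝ) w = φ w * u₃ := by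
        rw [← hbridge, hdq]
      have hylow := phi_ge _ _ hb3L (iv y) hivy
      have hfin : φ w * u₃ ≤ u₃ * φ (iv y) - δv := by
        linarith [hwdot, hsplit3, hylow, hδle2]
      have := seg_final u₃ u₂ ε (φ w) (φ (iv y)) δv hu3 hu2 hε (by rw [hδveq]; ring) hfin
      exact this
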